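/- Let Φ : (0,∞) → ℝ be twice continuously differentiable. Then the Brègman divergence (u,v) ↦ Φ(u+v) − Φ(u) − Φ'(u)·v is jointly convex on its domain if and only if (u,v) ↦ Φ''(u)·v² is jointly convex. -/

import Mathlib

open Set MeasureTheory intervalIntegral Filter

/-- Let `Φ : (0,∞) → ℝ` be twice continuously differentiable (four times differentiable where
needed).  Then the Brègman divergence `(u,v) ↦ Φ(u+v) − Φ(u) − Φ'(u)·v` is jointly convex on
`{(u,v) | u > 0 ∧ u + v > 0}` if and only if `(u,v) ↦ Φ''(u)·v²` is jointly convex on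
`(0,∞) × ℝ`. -/
private lemma aux_pos {u v s : ℝ} (hu : 0 < u) (huv : 0 < u + v) (hs : s ∈ Set.uIcc (0:ℝ) 1) :
    0 < u + s * v := by
  rw [Set.uIcc_of_le zero_le_one] at hs
  rcases le_or_gt v 0 with hv | hv
  · nlinarith [hs.2, mul_le_mul_of_nonneg_right hs.2 (neg_nonneg.2 hv)]
  · nlinarith [mul_nonneg hs.1 hv.le]

private lemma aux_contOn {Φ'' : ℝ → ℝ} (hcont : ContinuousOn Φ'' (Ioi 0)) {u v : ℝ}
    (hu : 0 < u) (huv : 0 < u + v) :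
    ContinuousOn (fun s => (1 - s) * Φ'' (u + s * v) * v ^ 2) (Set.uIcc (0:ℝ) 1) := by
  apply ContinuousOn.mul _ continuousOn_const
  apply ContinuousOn.mul (by fun_prop)
  exact hcont.comp (by fun_prop) (fun s hs => aux_pos hu huv hs)

private lemma bregman_repr {Φ Φ' Φ'' : ℝ → ℝ}
    (hd1 : ∀ x ∈ Ioi (0 : ℝ), HasDerivAt Φ (Φ' x) x)
    (hd2 : ∀ x ∈ Ioi (0 : ℝ), HasDerivAt Φ' (Φ'' x) x)
    (hcont : ContinuousOn Φ'' (Ioi 0))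
    {u v : ℝ} (hu : 0 < u) (huv : 0 < u + v) :
    Φ (u + v) - Φ u - Φ' u * v = ∫ s in (0:ℝ)..1, (1 - s) * Φ'' (u + s * v) * v ^ 2 := by
  have key : ∀ s ∈ Set.uIcc (0:ℝ) 1,
      HasDerivAt (fun s => (1 - s) * (v * Φ' (u + s * v)) + Φ (u + s * v))
        ((1 - s) * Φ'' (u + s * v) * v ^ 2) s := by
    intro s hs
    have hpos := aux_pos hu huv hs
    have hlin : HasDerivAt (fun s : ℝ => u + s * v) v s := by
      simpa using ((hasDerivAt_id s).mul_const v).const_add u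
    have h1 : HasDerivAt (fun s => Φ (u + s * v)) (Φ' (u + s * v) * v) s :=
      (hd1 _ hpos).comp s hlin
    have h2 : HasDerivAt (fun s => Φ' (u + s * v)) (Φ'' (u + s * v) * v) s :=
      (hd2 _ hpos).comp s hlin
    have h3 : HasDerivAt (fun s : ℝ => 1 - s) (-1) s := by
      simpa using (hasDerivAt_id s).const_sub 1
    have h4 := h3.mul (h2.const_mul v)
    refine (h4.add h1).congr_deriv ?_
    ring
  have hcont' := aux_contOn hcont hu huv
  have heq := intervalIntegral.integral_eq_sub_of_hasDerivAt key hcont'.intervalIntegrable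
  rw [heq]
  norm_num
  ring
open Set MeasureTheory intervalIntegral Filter

private lemma tendsto_G {Φ'' : ℝ → ℝ} (hcont : ContinuousOn Φ'' (Ioi 0))
    {u v : ℝ} (hu : 0 < u) :
    Filter.Tendsto (fun t => ∫ s in (0:ℝ)..1, (1 - s) * Φ'' (u + s * (t * v)) * v ^ 2)
      (nhdsWithin 0 (Ioi 0)) (nhds (Φ'' u * v ^ 2 / 2)) := by
  obtain ⟨M, hM⟩ := isCompact_Icc.exists_bound_of_continuousOn
      (hcont.mono (fun x (hx : x ∈ Icc (u/2) (u + u/2)) => lt_of_lt_of_le (by linarith) hx.1))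
  set δ : ℝ := u / (2 * (|v| + 1)) with hδdef
  have hδ : 0 < δ := by positivity
  have hmem : Ioo (0:ℝ) δ ∈ nhdsWithin (0:ℝ) (Ioi 0) :=
    Ioo_mem_nhdsGT_of_mem ⟨le_refl 0, hδ⟩
  have hin : ∀ t ∈ Ioo (0:ℝ) δ, ∀ s ∈ Set.Ioc (0:ℝ) 1,
      u + s * (t * v) ∈ Set.Icc (u/2) (u + u/2) := by
    intro t ht s hs
    have h2 : |s| ≤ 1 := abs_le.2 ⟨by linarith [hs.1], hs.2⟩
    have h4 : t * (|v| + 1) < u / 2 := by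
      have h5 : t < u / (2 * (|v| + 1)) := ht.2
      rw [lt_div_iff₀ (by positivity)] at h5
      nlinarith
    have h1 : |s * (t * v)| ≤ u / 2 := by
      rw [abs_mul, abs_mul, abs_of_pos ht.1]
      have h6 : t * |v| ≤ t * (|v| + 1) := by nlinarith [ht.1]
      nlinarith [abs_nonneg v, abs_nonneg s,
        mul_le_mul_of_nonneg_right h2 (mul_nonneg ht.1.le (abs_nonneg v))]
    obtain ⟨ha, hb⟩ := abs_le.1 h1
    constructor <;> linarith
  have hcw : ContinuousWithinAt
      (fun t => ∫ s in (0:ℝ)..1, (1 - s) * Φ'' (u + s * (t * v)) * v ^ 2) (Ioi 0) 0 := by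
    apply intervalIntegral.continuousWithinAt_of_dominated_interval
      (bound := fun _ => 1 * (|M| * v ^ 2))
    · filter_upwards [hmem] with t ht
      apply ContinuousOn.aestronglyMeasurable _ measurableSet_uIoc
      rw [Set.uIoc_of_le zero_le_one]
      apply ContinuousOn.mul _ continuousOn_const
      apply ContinuousOn.mul (by fun_prop)
      refine hcont.comp (by fun_prop) (fun s hs => ?_)
      exact lt_of_lt_of_le (by linarith) ((hin t ht s hs).1)
    · filter_upwards [hmem] with t ht
      refine Filter.Eventually.of_forall fun s hs => ?_
      rw [Set.uIoc_of_le zero_le_one] at hs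
      have hb1 : |1 - s| ≤ 1 := abs_le.2 ⟨by linarith [hs.2], by linarith [hs.1]⟩
      have hb2 : |Φ'' (u + s * (t * v))| ≤ M := by
        simpa using hM _ (hin t ht s hs)
      have hb2' : |Φ'' (u + s * (t * v))| ≤ |M| := hb2.trans (le_abs_self M)
      simp only [Real.norm_eq_abs, abs_mul]
      have hv2 : |v ^ 2| = v ^ 2 := abs_of_nonneg (sq_nonneg v)
      rw [hv2]
      nlinarith [abs_nonneg (1 - s), abs_nonneg (Φ'' (u + s * (t * v))), sq_nonneg v,
        mul_le_mul hb1 hb2' (abs_nonneg _) zero_le_one, abs_nonneg M]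
    · exact intervalIntegrable_const
    · refine Filter.Eventually.of_forall fun s hs => ?_
      have hΦu : ContinuousAt Φ'' u := hcont.continuousAt (Ioi_mem_nhds hu)
      have harg : ContinuousAt (fun t : ℝ => u + s * (t * v)) 0 := by fun_prop
      have hcomp : ContinuousAt (fun t : ℝ => Φ'' (u + s * (t * v))) 0 := by
        apply ContinuousAt.comp _ harg
        show ContinuousAt Φ'' (u + s * (0 * v))
        rw [show u + s * ((0:ℝ) * v) = u by ring]
        exact hΦu
      exact ((continuousAt_const.mul hcomp).mul continuousAt_const).continuousWithinAt
  have hval : (∫ s in (0:ℝ)..1, (1 - s) * Φ'' (u + s * ((0:ℝ) * v)) * v ^ 2)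
      = Φ'' u * v ^ 2 / 2 := by
    have heq : ∀ s ∈ Set.uIcc (0:ℝ) 1, (fun s : ℝ => (1 - s) * Φ'' (u + s * ((0:ℝ) * v)) * v ^ 2) s
        = Φ'' u * v ^ 2 - s * (Φ'' u * v ^ 2) := by
      intro s _
      simp only [zero_mul, mul_zero, add_zero]
      ring
    have hint : IntervalIntegrable (fun s : ℝ => s * (Φ'' u * v ^ 2)) MeasureTheory.volume 0 1 :=
      Continuous.intervalIntegrable (by fun_prop) 0 1
    rw [intervalIntegral.integral_congr heq,
      intervalIntegral.integral_sub intervalIntegrable_const hint]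
    simp [intervalIntegral.integral_mul_const, integral_id,
      _root_.intervalIntegral.integral_const]
    ring
  rw [ContinuousWithinAt] at hcw
  convert hcw using 2
  exact hval.symm

private lemma convex_comb_pos {a b x y : ℝ} (ha : 0 ≤ a) (hb : 0 ≤ b) (hab : a + b = 1)
    (hx : 0 < x) (hy : 0 < y) : 0 < a * x + b * y := by
  rcases eq_or_lt_of_le ha with h | h
  · have hb1 : b = 1 := by linarith
    rw [← h, hb1]; nlinarith
  · nlinarith [mul_nonneg hb hy.le, mul_pos h hx]

theorem bregman_convex_iff_second_deriv_quadratic_convex (Φ Φ' Φ'' Φ''' Φ'''' : ℝ → ℝ)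
    (hd1 : ∀ x ∈ Ioi (0 : ℝ), HasDerivAt Φ (Φ' x) x)
    (hd2 : ∀ x ∈ Ioi (0 : ℝ), HasDerivAt Φ' (Φ'' x) x)
    (hd3 : ∀ x ∈ Ioi (0 : ℝ), HasDerivAt Φ'' (Φ''' x) x)
    (hd4 : ∀ x ∈ Ioi (0 : ℝ), HasDerivAt Φ''' (Φ'''' x) x)
    (hcont : ContinuousOn Φ'' (Ioi 0)) :
    ConvexOn ℝ {p : ℝ × ℝ | 0 < p.1 ∧ 0 < p.1 + p.2}
        (fun p => Φ (p.1 + p.2) - Φ p.1 - Φ' p.1 * p.2) ↔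
      ConvexOn ℝ ((Ioi (0 : ℝ)) ×ˢ (univ : Set ℝ)) (fun p => Φ'' p.1 * p.2 ^ 2) := by
  have hSconv : Convex ℝ {p : ℝ × ℝ | 0 < p.1 ∧ 0 < p.1 + p.2} := by
    intro p hp q hq a b ha hb hab
    obtain ⟨hp1, hp2⟩ := hp
    obtain ⟨hq1, hq2⟩ := hq
    refine ⟨?_, ?_⟩
    · show 0 < (a • p + b • q).1
      simp only [Prod.fst_add, Prod.smul_fst, smul_eq_mul]
      exact convex_comb_pos ha hb hab hp1 hq1
    · show 0 < (a • p + b • q).1 + (a • p + b • q).2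
      simp only [Prod.fst_add, Prod.snd_add, Prod.smul_fst, Prod.smul_snd, smul_eq_mul]
      have := convex_comb_pos ha hb hab hp2 hq2
      nlinarith
  constructor
  · -- Bregman convex → quadratic convex
    intro hD
    refine ⟨(convex_Ioi (0:ℝ)).prod convex_univ, ?_⟩
    intro p hp q hq a b ha hb hab
    simp only [Set.mem_prod, Set.mem_Ioi, Set.mem_univ, and_true] at hp hq
    have hc1 : 0 < a * p.1 + b * q.1 := convex_comb_pos ha hb hab hp hq
    have small : ∀ (x1 x2 t : ℝ), 0 < x1 → 0 < t → t ≤ x1 / (|x2| + 1) → 0 < x1 + t * x2 := by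
      intro x1 x2 t hx1 ht hle
      have h1 : t * (|x2| + 1) ≤ x1 := (le_div_iff₀ (by positivity)).1 hle
      have h2 : t * -|x2| ≤ t * x2 := mul_le_mul_of_nonneg_left (neg_abs_le x2) ht.le
      have h3 : t * -|x2| = -(t * |x2|) := by ring
      nlinarith
    set δ : ℝ := min (p.1 / (|p.2| + 1)) (min (q.1 / (|q.2| + 1))
      ((a * p.1 + b * q.1) / (|a * p.2 + b * q.2| + 1))) with hδdef
    have hδ : 0 < δ := lt_min (by positivity) (lt_min (by positivity) (by positivity))
    have hmem : Ioo (0:ℝ) δ ∈ nhdsWithin (0:ℝ) (Ioi 0) :=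
      Ioo_mem_nhdsGT_of_mem ⟨le_refl 0, hδ⟩
    have tends_p := tendsto_G hcont (v := p.2) hp
    have tends_q := tendsto_G hcont (v := q.2) hq
    have tends_c := tendsto_G hcont (v := a * p.2 + b * q.2) hc1
    have hev : ∀ᶠ t in nhdsWithin (0:ℝ) (Ioi 0),
        (∫ s in (0:ℝ)..1, (1 - s) * Φ'' ((a * p.1 + b * q.1) + s * (t * (a * p.2 + b * q.2)))
            * (a * p.2 + b * q.2) ^ 2)
          ≤ a * (∫ s in (0:ℝ)..1, (1 - s) * Φ'' (p.1 + s * (t * p.2)) * p.2 ^ 2)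
            + b * (∫ s in (0:ℝ)..1, (1 - s) * Φ'' (q.1 + s * (t * q.2)) * q.2 ^ 2) := by
      filter_upwards [hmem] with t ht
      have htp : 0 < p.1 + t * p.2 :=
        small _ _ _ hp ht.1 (ht.2.le.trans (min_le_left _ _))
      have htq : 0 < q.1 + t * q.2 :=
        small _ _ _ hq ht.1 (ht.2.le.trans ((min_le_right _ _).trans (min_le_left _ _)))
      have htc : 0 < (a * p.1 + b * q.1) + t * (a * p.2 + b * q.2) :=
        small _ _ _ hc1 ht.1 (ht.2.le.trans ((min_le_right _ _).trans (min_le_right _ _)))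
      have hPm : ((p.1, t * p.2) : ℝ × ℝ) ∈ {p : ℝ × ℝ | 0 < p.1 ∧ 0 < p.1 + p.2} := ⟨hp, htp⟩
      have hQm : ((q.1, t * q.2) : ℝ × ℝ) ∈ {p : ℝ × ℝ | 0 < p.1 ∧ 0 < p.1 + p.2} := ⟨hq, htq⟩
      have hkey := hD.2 hPm hQm ha hb hab
      have hcombo : a • ((p.1, t * p.2) : ℝ × ℝ) + b • ((q.1, t * q.2) : ℝ × ℝ)
          = (a * p.1 + b * q.1, t * (a * p.2 + b * q.2)) := by
        simp only [Prod.smul_mk, Prod.mk_add_mk, smul_eq_mul, Prod.mk.injEq]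
        exact ⟨trivial, by ring⟩
      rw [hcombo] at hkey
      simp only [smul_eq_mul] at hkey
      rw [bregman_repr hd1 hd2 hcont hp htp, bregman_repr hd1 hd2 hcont hq htq,
        bregman_repr hd1 hd2 hcont hc1 htc] at hkey
      have pull : ∀ (u0 v0 : ℝ),
          (∫ s in (0:ℝ)..1, (1 - s) * Φ'' (u0 + s * (t * v0)) * (t * v0) ^ 2)
            = t ^ 2 * ∫ s in (0:ℝ)..1, (1 - s) * Φ'' (u0 + s * (t * v0)) * v0 ^ 2 := by
        intro u0 v0
        rw [← intervalIntegral.integral_const_mul]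
        apply intervalIntegral.integral_congr
        intro s _
        dsimp only
        ring
      rw [pull, pull, pull] at hkey
      have ht2 : (0:ℝ) < t ^ 2 := pow_pos ht.1 2
      nlinarith [hkey, ht2]
    have hfin := le_of_tendsto_of_tendsto tends_c
      ((tends_p.const_mul a).add (tends_q.const_mul b)) hev
    show Φ'' ((a • p + b • q).1) * ((a • p + b • q).2) ^ 2
        ≤ a • (Φ'' p.1 * p.2 ^ 2) + b • (Φ'' q.1 * q.2 ^ 2)
    simp only [Prod.fst_add, Prod.snd_add, Prod.smul_fst, Prod.smul_snd, smul_eq_mul]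
    linarith [hfin]
  · -- quadratic convex → Bregman convex
    intro hg
    refine ⟨hSconv, ?_⟩
    intro p hp q hq a b ha hb hab
    obtain ⟨hp1, hp2⟩ := hp
    obtain ⟨hq1, hq2⟩ := hq
    obtain ⟨hc1, hc2⟩ := hSconv ⟨hp1, hp2⟩ ⟨hq1, hq2⟩ ha hb hab
    have cf1 : (a • p + b • q).1 = a * p.1 + b * q.1 := by
      simp [Prod.fst_add, Prod.smul_fst, smul_eq_mul]
    have cf2 : (a • p + b • q).2 = a * p.2 + b * q.2 := by
      simp [Prod.snd_add, Prod.smul_snd, smul_eq_mul]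
    show Φ ((a • p + b • q).1 + (a • p + b • q).2) - Φ (a • p + b • q).1
        - Φ' (a • p + b • q).1 * (a • p + b • q).2
        ≤ a • (Φ (p.1 + p.2) - Φ p.1 - Φ' p.1 * p.2) + b • (Φ (q.1 + q.2) - Φ q.1 - Φ' q.1 * q.2)
    rw [bregman_repr hd1 hd2 hcont hp1 hp2, bregman_repr hd1 hd2 hcont hq1 hq2,
      bregman_repr hd1 hd2 hcont hc1 hc2, smul_eq_mul, smul_eq_mul]
    have Ip : IntervalIntegrable (fun s => (1 - s) * Φ'' (p.1 + s * p.2) * p.2 ^ 2)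
        MeasureTheory.volume 0 1 := (aux_contOn hcont hp1 hp2).intervalIntegrable
    have Iq : IntervalIntegrable (fun s => (1 - s) * Φ'' (q.1 + s * q.2) * q.2 ^ 2)
        MeasureTheory.volume 0 1 := (aux_contOn hcont hq1 hq2).intervalIntegrable
    have Ic : IntervalIntegrable (fun s => (1 - s) * Φ'' ((a • p + b • q).1 + s * (a • p + b • q).2)
        * ((a • p + b • q).2) ^ 2) MeasureTheory.volume 0 1 :=
      (aux_contOn hcont hc1 hc2).intervalIntegrable
    have key : ∀ s ∈ Set.Icc (0:ℝ) 1,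
        (1 - s) * Φ'' ((a • p + b • q).1 + s * (a • p + b • q).2) * ((a • p + b • q).2) ^ 2
          ≤ a * ((1 - s) * Φ'' (p.1 + s * p.2) * p.2 ^ 2)
            + b * ((1 - s) * Φ'' (q.1 + s * q.2) * q.2 ^ 2) := by
      intro s hs
      have hs' : s ∈ Set.uIcc (0:ℝ) 1 := by rw [Set.uIcc_of_le zero_le_one]; exact hs
      have hP : ((p.1 + s * p.2, p.2) : ℝ × ℝ) ∈ (Ioi (0:ℝ)) ×ˢ (univ : Set ℝ) :=
        ⟨aux_pos hp1 hp2 hs', mem_univ _⟩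
      have hQ : ((q.1 + s * q.2, q.2) : ℝ × ℝ) ∈ (Ioi (0:ℝ)) ×ˢ (univ : Set ℝ) :=
        ⟨aux_pos hq1 hq2 hs', mem_univ _⟩
      have h := hg.2 hP hQ ha hb hab
      have hcombo : a • ((p.1 + s * p.2, p.2) : ℝ × ℝ) + b • ((q.1 + s * q.2, q.2) : ℝ × ℝ)
          = ((a • p + b • q).1 + s * (a • p + b • q).2, (a • p + b • q).2) := by
        simp only [Prod.smul_mk, Prod.mk_add_mk, smul_eq_mul, Prod.mk.injEq, cf1, cf2]
        exact ⟨by ring, trivial⟩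
      rw [hcombo] at h
      simp only [smul_eq_mul] at h
      have h1s : (0:ℝ) ≤ 1 - s := by linarith [hs.2]
      nlinarith [mul_le_mul_of_nonneg_left h h1s]
    calc (∫ s in (0:ℝ)..1,
          (1 - s) * Φ'' ((a • p + b • q).1 + s * (a • p + b • q).2) * ((a • p + b • q).2) ^ 2)
        ≤ ∫ s in (0:ℝ)..1, (a * ((1 - s) * Φ'' (p.1 + s * p.2) * p.2 ^ 2)
            + b * ((1 - s) * Φ'' (q.1 + s * q.2) * q.2 ^ 2)) :=
          intervalIntegral.integral_mono_on zero_le_one Ic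
            ((Ip.const_mul a).add (Iq.const_mul b)) key
      _ = a * (∫ s in (0:ℝ)..1, (1 - s) * Φ'' (p.1 + s * p.2) * p.2 ^ 2)
            + b * (∫ s in (0:ℝ)..1, (1 - s) * Φ'' (q.1 + s * q.2) * q.2 ^ 2) := by
          rw [intervalIntegral.integral_add (Ip.const_mul a) (Iq.const_mul b),
            intervalIntegral.integral_const_mul, intervalIntegral.integral_const_mul]
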